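/- If two replacement policies P and P' of the same associativity n have equal trace semantics, then for every initial cache content cc_0, the caches they induce have equal trace semantics: ⟦Cache(P, cc_0, n)⟧ = ⟦Cache(P', cc_0, n)⟧. -/
import Mathlib


structure Mealy (I O S : Type) where
  init : S
  step : S → I → S
  out : S → I → O

def Mealy.run {I O S : Type} (M : Mealy I O S) : S → List (I × O) → Prop
  | _, [] => True
  | s, (i, o) :: t => M.out s i = o ∧ M.run (M.step s i) t

def Mealy.traces {I O S : Type} (M : Mealy I O S) : Set (List (I × O)) :=
  {t | M.run M.init t}

inductive PIn (n : ℕ) where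
  | hit (i : Fin n)
  | evct
deriving DecidableEq

inductive POut (n : ℕ) where
  | none
  | evict (i : Fin n)
deriving DecidableEq

inductive COut where
  | hit
  | miss
deriving DecidableEq

/-- The well-formedness conditions on a replacement policy:
`λ(cs, Evct)` is some `Evict i` and `λ(cs, Hit i) = ⊥`. -/
def ValidPolicy {n : ℕ} {S : Type} (P : Mealy (PIn n) (POut n) S) : Prop :=
  (∀ cs, ∃ i, P.out cs PIn.evct = POut.evict i) ∧
  (∀ cs i, P.out cs (PIn.hit i) = POut.none)

/-- The cache transition relation induced by a replacement policy. -/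
inductive CacheStep {n : ℕ} {S B : Type} (P : Mealy (PIn n) (POut n) S) :
    (Fin n → B) × S → B → COut → (Fin n → B) × S → Prop where
  | hit {cc : Fin n → B} {cs : S} {b : B} (i : Fin n) :
      cc i = b → P.out cs (PIn.hit i) = POut.none →
      CacheStep P (cc, cs) b COut.hit (cc, P.step cs (PIn.hit i))
  | miss {cc : Fin n → B} {cs : S} {b : B} (i : Fin n) :
      (∀ j, cc j ≠ b) → P.out cs PIn.evct = POut.evict i →
      CacheStep P (cc, cs) b COut.miss (Function.update cc i b, P.step cs PIn.evct)

def CacheRun {n : ℕ} {S B : Type} (P : Mealy (PIn n) (POut n) S) :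
    (Fin n → B) × S → List (B × COut) → Prop
  | _, [] => True
  | s, (b, o) :: t => ∃ s', CacheStep P s b o s' ∧ CacheRun P s' t

def CacheTraces {n : ℕ} {S B : Type} (P : Mealy (PIn n) (POut n) S)
    (cc₀ : Fin n → B) : Set (List (B × COut)) :=
  {t | CacheRun P (cc₀, P.init) t}

/-- Run-equivalent states give the same eviction output. -/
lemma evct_out_eq {n : ℕ} {S S' : Type}
    (P : Mealy (PIn n) (POut n) S) (P' : Mealy (PIn n) (POut n) S')
    (hP : ValidPolicy P) {cs : S} {cs' : S'}
    (hR : ∀ w, P.run cs w ↔ P'.run cs' w) :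
    P'.out cs' PIn.evct = P.out cs PIn.evct := by
  obtain ⟨i, hi⟩ := hP.1 cs
  have h : P.run cs [(PIn.evct, POut.evict i)] := ⟨hi, trivial⟩
  have h' := (hR _).1 h
  rw [hi]
  exact h'.1

/-- Run-equivalence is preserved by stepping on the same input. -/
lemma run_equiv_step {n : ℕ} {S S' : Type}
    (P : Mealy (PIn n) (POut n) S) (P' : Mealy (PIn n) (POut n) S')
    {cs : S} {cs' : S'}
    (hR : ∀ w, P.run cs w ↔ P'.run cs' w)
    (i : PIn n) (hout : P'.out cs' i = P.out cs i) :
    ∀ w, P.run (P.step cs i) w ↔ P'.run (P'.step cs' i) w := by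
  intro w
  have h1 : P.run cs ((i, P.out cs i) :: w) ↔ P.run (P.step cs i) w := by
    constructor
    · exact fun h => h.2
    · exact fun h => ⟨rfl, h⟩
  have h2 : P'.run cs' ((i, P.out cs i) :: w) ↔ P'.run (P'.step cs' i) w := by
    constructor
    · exact fun h => h.2
    · exact fun h => ⟨hout, h⟩
  rw [← h1, hR, h2]

lemma update_inj {n : ℕ} {B : Type} {cc : Fin n → B} {b : B}
    (hinj : Function.Injective cc) (habs : ∀ j, cc j ≠ b) (i : Fin n) :
    Function.Injective (Function.update cc i b) := by
  intro x y h
  by_cases hx : x = i <;> by_cases hy : y = i <;>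
    simp [Function.update, hx, hy] at h ⊢
  · exact absurd h.symm (habs y)
  · exact absurd h (habs x)
  · exact hinj h

lemma cache_run_mono {n : ℕ} {S S' B : Type}
    (P : Mealy (PIn n) (POut n) S) (P' : Mealy (PIn n) (POut n) S')
    (hP : ValidPolicy P) (hP' : ValidPolicy P') :
    ∀ (t : List (B × COut)) (cc : Fin n → B) (cs : S) (cs' : S'),
      Function.Injective cc →
      (∀ w, P.run cs w ↔ P'.run cs' w) →
      CacheRun P (cc, cs) t → CacheRun P' (cc, cs') t := by
  intro t
  induction t with
  | nil => intro _ _ _ _ _ _; trivial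
  | cons p t ih =>
    obtain ⟨b, o⟩ := p
    intro cc cs cs' hinj hR h
    obtain ⟨s2, hstep, hrun⟩ := h
    cases hstep with
    | hit i hi _ =>
      refine ⟨(cc, P'.step cs' (PIn.hit i)),
        CacheStep.hit i hi (hP'.2 cs' i), ?_⟩
      exact ih cc _ _ hinj
        (run_equiv_step P P' hR (PIn.hit i) (by rw [hP'.2, hP.2])) hrun
    | miss i habs hev =>
      have hout : P'.out cs' PIn.evct = P.out cs PIn.evct :=
        evct_out_eq P P' hP hR
      refine ⟨(Function.update cc i b, P'.step cs' PIn.evct),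
        CacheStep.miss i habs (by rw [hout, hev]), ?_⟩
      exact ih _ _ _ (update_inj hinj habs i)
        (run_equiv_step P P' hR PIn.evct hout) hrun

theorem policy_semantics_determines_cache_semantics {n : ℕ} {S S' B : Type}
    (P : Mealy (PIn n) (POut n) S) (P' : Mealy (PIn n) (POut n) S')
    (hP : ValidPolicy P) (hP' : ValidPolicy P')
    (heq : P.traces = P'.traces)
    (cc₀ : Fin n → B) (hcc₀ : Function.Injective cc₀) :
    CacheTraces P cc₀ = CacheTraces P' cc₀ := by
  have hR : ∀ w, P.run P.init w ↔ P'.run P'.init w := by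
    intro w
    have h1 : w ∈ P.traces ↔ w ∈ P'.traces := by rw [heq]
    exact h1
  ext t
  constructor
  · exact fun h => cache_run_mono P P' hP hP' t cc₀ _ _ hcc₀ hR h
  · exact fun h => cache_run_mono P' P hP' hP t cc₀ _ _ hcc₀
      (fun w => (hR w).symm) h
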